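/- Let μ̃ > 0, β > 0, G > 0, define step sizes η_t = min{ μ̃/β², 2/(μ̃ t) } and μ' := μ̃/2, and let t_0 := min{ t ≥ 1 : 2/(μ̃ t) ≤ μ̃/β² }. Then for any integers 1 ≤ s ≤ n, ∑_{k=s}^{n} 2 η_k G ∏_{t=k+1}^{n} (1 − η_t μ') ≤ 8G/μ̃. -/

import Mathlib

lemma aux_telescope (c : ℕ → ℝ) (h0 : ∀ t, 1 ≤ t → 0 ≤ c t) (h1 : ∀ t, 1 ≤ t → c t ≤ 1)
    (s : ℕ) (hs : 1 ≤ s) :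
    ∀ n, s ≤ n → ∑ k ∈ Finset.Icc s n, (1 - c k) * ∏ t ∈ Finset.Icc (k + 1) n, c t ≤ 1 := by
  intro n hn
  induction n, hn using Nat.le_induction with
  | base =>
    simp only [Finset.Icc_self, Finset.sum_singleton]
    have : Finset.Icc (s + 1) s = ∅ := by
      rw [Finset.Icc_eq_empty_iff]; omega
    rw [this, Finset.prod_empty, mul_one]
    have := h0 s hs
    linarith
  | succ n hn ih =>
    have hS := ih
    have hstep : ∀ k ∈ Finset.Icc s n, k + 1 ≤ n + 1 := by
      intro k hk; simp at hk; omega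
    rw [Finset.sum_Icc_succ_top (by omega)]
    have hprod : ∀ k ∈ Finset.Icc s n,
        (1 - c k) * ∏ t ∈ Finset.Icc (k + 1) (n + 1), c t
        = ((1 - c k) * ∏ t ∈ Finset.Icc (k + 1) n, c t) * c (n + 1) := by
      intro k hk
      rw [Finset.prod_Icc_succ_top (hstep k hk)]
      ring
    rw [Finset.sum_congr rfl hprod, ← Finset.sum_mul]
    have hempty : Finset.Icc (n + 1 + 1) (n + 1) = ∅ := by
      rw [Finset.Icc_eq_empty_iff]; omega
    rw [hempty, Finset.prod_empty, mul_one]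
    have hc0 := h0 (n + 1) (by omega)
    have hc1 := h1 (n + 1) (by omega)
    nlinarith

/-- (Equation (A.3) of the paper.)  For the step-size schedule
`η_t = min{μ̃/β², 2/(μ̃ t)}` and `μ' = μ̃/2`, the weighted geometric sums appearing in
the stability analysis are bounded: `∑_{k=s}^n 2 η_k G ∏_{t=k+1}^n (1 - η_t μ') ≤ 8G/μ̃`. -/
theorem step_size_geometric_sum_bound
    (μt β G : ℝ) (hμt : 0 < μt) (hβ : 0 < β) (hG : 0 < G)
    (η : ℕ → ℝ) (hη : ∀ t : ℕ, η t = min (μt / β ^ 2) (2 / (μt * t)))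
    (s n : ℕ) (hs : 1 ≤ s) (hn : s ≤ n) :
    ∑ k ∈ Finset.Icc s n, 2 * η k * G * ∏ t ∈ Finset.Icc (k + 1) n, (1 - η t * (μt / 2))
      ≤ 8 * G / μt := by
  set c : ℕ → ℝ := fun t => 1 - η t * (μt / 2) with hc
  have hηnn : ∀ t, 1 ≤ t → 0 ≤ η t := by
    intro t ht
    rw [hη t]
    apply le_min
    · positivity
    · have : (0:ℝ) < (t:ℝ) := by exact_mod_cast ht
      positivity
  have hηub : ∀ t, 1 ≤ t → η t * (μt / 2) ≤ 1 := by
    intro t ht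
    have htpos : (0:ℝ) < (t:ℝ) := by exact_mod_cast ht
    have h1 : η t ≤ 2 / (μt * t) := by rw [hη t]; exact min_le_right _ _
    have h2 : η t * (μt / 2) ≤ (2 / (μt * t)) * (μt / 2) := by
      apply mul_le_mul_of_nonneg_right h1; positivity
    have h3 : (2 / (μt * t)) * (μt / 2) = 1 / t := by
      field_simp
    rw [h3] at h2
    have h4 : (1:ℝ) / t ≤ 1 := by
      rw [div_le_one htpos]; exact_mod_cast ht
    linarith
  have h0 : ∀ t, 1 ≤ t → 0 ≤ c t := by
    intro t ht; simp only [hc]; linarith [hηub t ht]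
  have h1 : ∀ t, 1 ≤ t → c t ≤ 1 := by
    intro t ht; simp only [hc]
    have := hηnn t ht
    nlinarith
  have hS := aux_telescope c h0 h1 s hs n hn
  have heq : ∀ k ∈ Finset.Icc s n,
      2 * η k * G * ∏ t ∈ Finset.Icc (k + 1) n, (1 - η t * (μt / 2))
      = (4 * G / μt) * ((1 - c k) * ∏ t ∈ Finset.Icc (k + 1) n, c t) := by
    intro k hk
    have : (1 : ℝ) - c k = η k * (μt / 2) := by simp [hc]
    rw [this]
    have hμ : μt ≠ 0 := ne_of_gt hμt
    simp only [hc]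
    generalize ∏ t ∈ Finset.Icc (k + 1) n, (1 - η t * (μt / 2)) = P
    field_simp [hc]
    ring
  rw [Finset.sum_congr rfl heq, ← Finset.mul_sum]
  have hpos : 0 < 4 * G / μt := by positivity
  have h4 : (4 * G / μt) * (∑ k ∈ Finset.Icc s n, (1 - c k) * ∏ t ∈ Finset.Icc (k + 1) n, c t) ≤ 4 * G / μt := by
    nlinarith
  have : 4 * G / μt ≤ 8 * G / μt := by
    gcongr
    linarith
  linarith
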